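/- With I, J as above and any finite α > 0, the unique maximizer over O ∈ 𝒪_{3,2} of tr(Oᵀ(−J + I + α^{-1}I)) is I, the unique maximizer of tr(Oᵀ(−I + I + α^{-1}J)) is J, and the unique maximizer of tr(Oᵀ(I + J + α^{-1}I)) is I; hence the point (I, J, I) is a fixed point of the proximal block relaxation update. -/
import Mathlib


open Matrix

private lemma aux1 (a p q r s t u : ℝ) (ha : 0 < a)
    (h1 : p*p+q*q+r*r = 1) (h2 : s*s+t*t+u*u = 1) (h3 : p*s+q*t+r*u = 0) :
    p*(1+a) - q - s + t*(1+a) ≤ 2 + 2*a := by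
  have hp : p ≤ 1 := by nlinarith [sq_nonneg (p-1), sq_nonneg q, sq_nonneg r]
  have ht : t ≤ 1 := by nlinarith [sq_nonneg (t-1), sq_nonneg s, sq_nonneg u]
  have hX : p - q - s + t ≤ 2 := by
    nlinarith [sq_nonneg (p-s+q-t), sq_nonneg (p-s-q+t-2), sq_nonneg (r-u)]
  nlinarith [mul_le_mul_of_nonneg_left (show p + t ≤ 2 by linarith) ha.le]

private lemma aux1eq (a p q r s t u : ℝ) (ha : 0 < a)
    (h1 : p*p+q*q+r*r = 1) (h2 : s*s+t*t+u*u = 1) (h3 : p*s+q*t+r*u = 0)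
    (hge : 2 + 2*a ≤ p*(1+a) - q - s + t*(1+a)) :
    p = 1 ∧ q = 0 ∧ r = 0 ∧ s = 0 ∧ t = 1 ∧ u = 0 := by
  have hp : p ≤ 1 := by nlinarith [sq_nonneg (p-1), sq_nonneg q, sq_nonneg r]
  have ht : t ≤ 1 := by nlinarith [sq_nonneg (t-1), sq_nonneg s, sq_nonneg u]
  have hX : p - q - s + t ≤ 2 := by
    nlinarith [sq_nonneg (p-s+q-t), sq_nonneg (p-s-q+t-2), sq_nonneg (r-u)]
  have h2' : 0 ≤ a * (p + t - 2) := by nlinarith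
  have hpt : p + t = 2 := by nlinarith
  have hp1 : p = 1 := by linarith
  have ht1 : t = 1 := by linarith
  have hq : q = 0 := mul_self_eq_zero.mp (by nlinarith [sq_nonneg r])
  have hr : r = 0 := mul_self_eq_zero.mp (by nlinarith [sq_nonneg q])
  have hs : s = 0 := mul_self_eq_zero.mp (by nlinarith [sq_nonneg u])
  have hu : u = 0 := mul_self_eq_zero.mp (by nlinarith [sq_nonneg s])
  exact ⟨hp1, hq, hr, hs, ht1, hu⟩

private lemma aux2 (a p q r s t u : ℝ) (ha : 0 < a)
    (h1 : p*p+q*q+r*r = 1) (h2 : s*s+t*t+u*u = 1) :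
    q*a + s*a ≤ 2*a := by
  have hq : q ≤ 1 := by nlinarith [sq_nonneg (q-1), sq_nonneg p, sq_nonneg r]
  have hs : s ≤ 1 := by nlinarith [sq_nonneg (s-1), sq_nonneg t, sq_nonneg u]
  nlinarith [mul_le_mul_of_nonneg_left (show q + s ≤ 2 by linarith) ha.le]

private lemma aux2eq (a p q r s t u : ℝ) (ha : 0 < a)
    (h1 : p*p+q*q+r*r = 1) (h2 : s*s+t*t+u*u = 1)
    (hge : 2*a ≤ q*a + s*a) :
    p = 0 ∧ q = 1 ∧ r = 0 ∧ s = 1 ∧ t = 0 ∧ u = 0 := by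
  have hq : q ≤ 1 := by nlinarith [sq_nonneg (q-1), sq_nonneg p, sq_nonneg r]
  have hs : s ≤ 1 := by nlinarith [sq_nonneg (s-1), sq_nonneg t, sq_nonneg u]
  have hqs : q + s = 2 := by nlinarith
  have hq1 : q = 1 := by linarith
  have hs1 : s = 1 := by linarith
  have hp : p = 0 := mul_self_eq_zero.mp (by nlinarith [sq_nonneg r])
  have hr : r = 0 := mul_self_eq_zero.mp (by nlinarith [sq_nonneg p])
  have ht : t = 0 := mul_self_eq_zero.mp (by nlinarith [sq_nonneg u])
  have hu : u = 0 := mul_self_eq_zero.mp (by nlinarith [sq_nonneg t])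
  exact ⟨hp, hq1, hr, hs1, ht, hu⟩

private lemma aux3 (a p q r s t u : ℝ) (ha : 0 < a)
    (h1 : p*p+q*q+r*r = 1) (h2 : s*s+t*t+u*u = 1) (h3 : p*s+q*t+r*u = 0) :
    p*(1+a) + q + s + t*(1+a) ≤ 2 + 2*a := by
  have hp : p ≤ 1 := by nlinarith [sq_nonneg (p-1), sq_nonneg q, sq_nonneg r]
  have ht : t ≤ 1 := by nlinarith [sq_nonneg (t-1), sq_nonneg s, sq_nonneg u]
  have hX : p + q + s + t ≤ 2 := by
    nlinarith [sq_nonneg (p+s-q-t), sq_nonneg (p+q+s+t-2), sq_nonneg (r+u)]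
  nlinarith [mul_le_mul_of_nonneg_left (show p + t ≤ 2 by linarith) ha.le]

private lemma aux3eq (a p q r s t u : ℝ) (ha : 0 < a)
    (h1 : p*p+q*q+r*r = 1) (h2 : s*s+t*t+u*u = 1) (h3 : p*s+q*t+r*u = 0)
    (hge : 2 + 2*a ≤ p*(1+a) + q + s + t*(1+a)) :
    p = 1 ∧ q = 0 ∧ r = 0 ∧ s = 0 ∧ t = 1 ∧ u = 0 := by
  have hp : p ≤ 1 := by nlinarith [sq_nonneg (p-1), sq_nonneg q, sq_nonneg r]
  have ht : t ≤ 1 := by nlinarith [sq_nonneg (t-1), sq_nonneg s, sq_nonneg u]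
  have hX : p + q + s + t ≤ 2 := by
    nlinarith [sq_nonneg (p+s-q-t), sq_nonneg (p+q+s+t-2), sq_nonneg (r+u)]
  have h2' : 0 ≤ a * (p + t - 2) := by nlinarith
  have hpt : p + t = 2 := by nlinarith
  have hp1 : p = 1 := by linarith
  have ht1 : t = 1 := by linarith
  have hq : q = 0 := mul_self_eq_zero.mp (by nlinarith [sq_nonneg r])
  have hr : r = 0 := mul_self_eq_zero.mp (by nlinarith [sq_nonneg q])
  have hs : s = 0 := mul_self_eq_zero.mp (by nlinarith [sq_nonneg u])
  have hu : u = 0 := mul_self_eq_zero.mp (by nlinarith [sq_nonneg s])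
  exact ⟨hp1, hq, hr, hs, ht1, hu⟩

private lemma hII : ((!![1, 0; 0, 1; 0, 0] : Matrix (Fin 3) (Fin 2) ℝ))ᵀ *
    ((!![1, 0; 0, 1; 0, 0] : Matrix (Fin 3) (Fin 2) ℝ)) = 1 := by
  ext i j
  fin_cases i <;> fin_cases j <;>
    simp [Matrix.mul_apply, Fin.sum_univ_three, Matrix.one_apply, Matrix.transpose_apply,
      Matrix.vecHead, Matrix.vecTail]

private lemma hJJ : ((!![0, 1; 1, 0; 0, 0] : Matrix (Fin 3) (Fin 2) ℝ))ᵀ *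
    ((!![0, 1; 1, 0; 0, 0] : Matrix (Fin 3) (Fin 2) ℝ)) = 1 := by
  ext i j
  fin_cases i <;> fin_cases j <;>
    simp [Matrix.mul_apply, Fin.sum_univ_three, Matrix.one_apply, Matrix.transpose_apply,
      Matrix.vecHead, Matrix.vecTail]

/-- With `I, J` as in the example and any finite `α > 0`: the unique maximizer over
`𝒪_{3,2}` of `tr(Oᵀ(-J + I + α⁻¹ I))` is `I`, of `tr(Oᵀ(-I + I + α⁻¹ J))` is `J`, and of
`tr(Oᵀ(I + J + α⁻¹ I))` is `I`; hence `(I, J, I)` is a fixed point of the proximal block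
relaxation update. -/
theorem proximal_update_fixed_point (α : ℝ) (hα : 0 < α) :
    letI I : Matrix (Fin 3) (Fin 2) ℝ := !![1, 0; 0, 1; 0, 0]
    letI J : Matrix (Fin 3) (Fin 2) ℝ := !![0, 1; 1, 0; 0, 0]
    (∀ O : Matrix (Fin 3) (Fin 2) ℝ,
      (Oᵀ * O = 1 ∧
        ∀ O' : Matrix (Fin 3) (Fin 2) ℝ, O'ᵀ * O' = 1 →
          Matrix.trace (O'ᵀ * (-J + I + α⁻¹ • I)) ≤ Matrix.trace (Oᵀ * (-J + I + α⁻¹ • I)))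
      ↔ O = I) ∧
    (∀ O : Matrix (Fin 3) (Fin 2) ℝ,
      (Oᵀ * O = 1 ∧
        ∀ O' : Matrix (Fin 3) (Fin 2) ℝ, O'ᵀ * O' = 1 →
          Matrix.trace (O'ᵀ * (-I + I + α⁻¹ • J)) ≤ Matrix.trace (Oᵀ * (-I + I + α⁻¹ • J)))
      ↔ O = J) ∧
    (∀ O : Matrix (Fin 3) (Fin 2) ℝ,
      (Oᵀ * O = 1 ∧
        ∀ O' : Matrix (Fin 3) (Fin 2) ℝ, O'ᵀ * O' = 1 →
          Matrix.trace (O'ᵀ * (I + J + α⁻¹ • I)) ≤ Matrix.trace (Oᵀ * (I + J + α⁻¹ • I)))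
      ↔ O = I) := by
  have ha : 0 < α⁻¹ := inv_pos.mpr hα
  refine ⟨fun O => ⟨?_, ?_⟩, fun O => ⟨?_, ?_⟩, fun O => ⟨?_, ?_⟩⟩
  · rintro ⟨hO, hmax⟩
    have h00 := congrFun (congrFun hO 0) 0
    have h11 := congrFun (congrFun hO 1) 1
    have h01 := congrFun (congrFun hO 0) 1
    simp [Matrix.mul_apply, Fin.sum_univ_three, Matrix.one_apply] at h00 h11 h01
    have hm := hmax _ hII
    simp [Matrix.trace, Matrix.diag, Matrix.mul_apply, Fin.sum_univ_three, Fin.sum_univ_two,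
      Matrix.vecHead, Matrix.vecTail] at hm
    obtain ⟨e1, e2, e3, e4, e5, e6⟩ :=
      aux1eq α⁻¹ (O 0 0) (O 1 0) (O 2 0) (O 0 1) (O 1 1) (O 2 1) ha h00 h11 h01 (by linarith)
    ext i j
    fin_cases i <;> fin_cases j <;> simp [e1, e2, e3, e4, e5, e6, Matrix.vecHead, Matrix.vecTail]
  · rintro rfl
    refine ⟨hII, fun O' hO' => ?_⟩
    have h00 := congrFun (congrFun hO' 0) 0
    have h11 := congrFun (congrFun hO' 1) 1
    have h01 := congrFun (congrFun hO' 0) 1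
    simp [Matrix.mul_apply, Fin.sum_univ_three, Matrix.one_apply] at h00 h11 h01
    simp [Matrix.trace, Matrix.diag, Matrix.mul_apply, Fin.sum_univ_three, Fin.sum_univ_two,
      Matrix.vecHead, Matrix.vecTail]
    linarith [aux1 α⁻¹ (O' 0 0) (O' 1 0) (O' 2 0) (O' 0 1) (O' 1 1) (O' 2 1) ha h00 h11 h01]
  · rintro ⟨hO, hmax⟩
    have h00 := congrFun (congrFun hO 0) 0
    have h11 := congrFun (congrFun hO 1) 1
    simp [Matrix.mul_apply, Fin.sum_univ_three, Matrix.one_apply] at h00 h11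
    have hm := hmax _ hJJ
    simp [Matrix.trace, Matrix.diag, Matrix.mul_apply, Fin.sum_univ_three, Fin.sum_univ_two,
      Matrix.vecHead, Matrix.vecTail] at hm
    obtain ⟨e1, e2, e3, e4, e5, e6⟩ :=
      aux2eq α⁻¹ (O 0 0) (O 1 0) (O 2 0) (O 0 1) (O 1 1) (O 2 1) ha h00 h11 (by linarith)
    ext i j
    fin_cases i <;> fin_cases j <;> simp [e1, e2, e3, e4, e5, e6, Matrix.vecHead, Matrix.vecTail]
  · rintro rfl
    refine ⟨hJJ, fun O' hO' => ?_⟩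
    have h00 := congrFun (congrFun hO' 0) 0
    have h11 := congrFun (congrFun hO' 1) 1
    simp [Matrix.mul_apply, Fin.sum_univ_three, Matrix.one_apply] at h00 h11
    simp [Matrix.trace, Matrix.diag, Matrix.mul_apply, Fin.sum_univ_three, Fin.sum_univ_two,
      Matrix.vecHead, Matrix.vecTail]
    linarith [aux2 α⁻¹ (O' 0 0) (O' 1 0) (O' 2 0) (O' 0 1) (O' 1 1) (O' 2 1) ha h00 h11]
  · rintro ⟨hO, hmax⟩
    have h00 := congrFun (congrFun hO 0) 0
    have h11 := congrFun (congrFun hO 1) 1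
    have h01 := congrFun (congrFun hO 0) 1
    simp [Matrix.mul_apply, Fin.sum_univ_three, Matrix.one_apply] at h00 h11 h01
    have hm := hmax _ hII
    simp [Matrix.trace, Matrix.diag, Matrix.mul_apply, Fin.sum_univ_three, Fin.sum_univ_two,
      Matrix.vecHead, Matrix.vecTail] at hm
    obtain ⟨e1, e2, e3, e4, e5, e6⟩ :=
      aux3eq α⁻¹ (O 0 0) (O 1 0) (O 2 0) (O 0 1) (O 1 1) (O 2 1) ha h00 h11 h01 (by linarith)
    ext i j
    fin_cases i <;> fin_cases j <;> simp [e1, e2, e3, e4, e5, e6, Matrix.vecHead, Matrix.vecTail]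
  · rintro rfl
    refine ⟨hII, fun O' hO' => ?_⟩
    have h00 := congrFun (congrFun hO' 0) 0
    have h11 := congrFun (congrFun hO' 1) 1
    have h01 := congrFun (congrFun hO' 0) 1
    simp [Matrix.mul_apply, Fin.sum_univ_three, Matrix.one_apply] at h00 h11 h01
    simp [Matrix.trace, Matrix.diag, Matrix.mul_apply, Fin.sum_univ_three, Fin.sum_univ_two,
      Matrix.vecHead, Matrix.vecTail]
    linarith [aux3 α⁻¹ (O' 0 0) (O' 1 0) (O' 2 0) (O' 0 1) (O' 1 1) (O' 2 1) ha h00 h11 h01]
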